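/- Let h : (0, r₀] → (0, ∞) be differentiable with h'(r)/h(r) = (2 + 2N(r))/r + E(r), |E(r)| ≤ Cr, and suppose N is nondecreasing up to constants in the sense that N(t) ≤ K·N(r) + K for all t ≤ r (with K ≥ 1). Then for 0 < s < r ≤ r₀: h(s) ≥ e^{-C r²/2}·(s/r)^{2 + 2K(N(r)+1)}·h(r). -/

import Mathlib

/-- "N controls the growth of h": if `h > 0` is differentiable with
`h'(r)/h(r) = (2 + 2N(r))/r + E(r)`, `|E(r)| ≤ Cr`, and `N(t) ≤ K·N(r) + K` whenever
`t ≤ r` (with `K ≥ 1`), then for `0 < s < r ≤ r₀`: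
`h(s) ≥ e^{-Cr²/2} (s/r)^{2 + 2K(N(r)+1)} h(r)`. -/
theorem stmt_11 (r₀ C K : ℝ) (hr₀ : 0 < r₀) (hC : 0 ≤ C) (hK : 1 ≤ K)
    (h h' N : ℝ → ℝ)
    (hpos : ∀ r ∈ Set.Ioc (0 : ℝ) r₀, 0 < h r)
    (hderiv : ∀ r ∈ Set.Ioc (0 : ℝ) r₀, HasDerivAt h (h' r) r)
    (hE : ∀ r ∈ Set.Ioc (0 : ℝ) r₀, |h' r / h r - (2 + 2 * N r) / r| ≤ C * r)
    (hNcont : ContinuousOn N (Set.Ioc (0 : ℝ) r₀))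
    (hmono : ∀ t r : ℝ, 0 < t → t ≤ r → r ≤ r₀ → N t ≤ K * N r + K) :
    ∀ s r : ℝ, 0 < s → s < r → r ≤ r₀ →
      Real.exp (-(C * r ^ 2) / 2) * (s / r) ^ (2 + 2 * K * (N r + 1)) * h r ≤ h s := by
  intro s r hs hsr hrr₀
  have hr : 0 < r := hs.trans hsr
  set A : ℝ := 2 + 2 * K * (N r + 1) with hA
  -- the comparison function
  set F : ℝ → ℝ := fun t => Real.log (h t) - A * Real.log t - C * t ^ 2 / 2 with hF
  have hsub : Set.Icc s r ⊆ Set.Ioc (0 : ℝ) r₀ := fun t ht =>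
    ⟨hs.trans_le ht.1, ht.2.trans hrr₀⟩
  -- F has derivative h'/h - A/t - C t at each t ∈ Ioc 0 r₀
  have hFderiv : ∀ t ∈ Set.Ioc (0 : ℝ) r₀,
      HasDerivAt F (h' t / h t - A / t - C * t) t := by
    intro t ht
    have ht0 : (0 : ℝ) < t := ht.1
    have h1 : HasDerivAt (fun u => Real.log (h u)) (h' t / h t) t :=
      (hderiv t ht).log (hpos t ht).ne'
    have h2 : HasDerivAt (fun u : ℝ => A * Real.log u) (A * t⁻¹) t :=
      (Real.hasDerivAt_log ht0.ne').const_mul A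
    have h3 : HasDerivAt (fun u : ℝ => C * u ^ 2 / 2) (C * (2 * t) / 2) t := by
      have := ((hasDerivAt_pow 2 t).const_mul C).div_const 2
      simpa using this
    have := (h1.sub h2).sub h3
    have e : h' t / h t - A / t - C * t = h' t / h t - A * t⁻¹ - C * (2 * t) / 2 := by ring
    rw [e]
    exact this
  -- F is antitone on [s, r]
  have hanti : AntitoneOn F (Set.Icc s r) := by
    apply antitoneOn_of_deriv_nonpos (convex_Icc s r)
    · exact fun t ht => ((hFderiv t (hsub ht)).continuousAt).continuousWithinAt
    · intro t ht
      rw [interior_Icc] at ht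
      exact ((hFderiv t (hsub (Set.Ioo_subset_Icc_self ht))).differentiableAt).differentiableWithinAt
    · intro t ht
      rw [interior_Icc] at ht
      have htm : t ∈ Set.Ioc (0 : ℝ) r₀ := hsub (Set.Ioo_subset_Icc_self ht)
      have ht0 : (0 : ℝ) < t := htm.1
      rw [(hFderiv t htm).deriv]
      have hEb : h' t / h t ≤ (2 + 2 * N t) / t + C * t := by
        have := (abs_le.mp (hE t htm)).2
        linarith
      have hNb : N t ≤ K * N r + K := hmono t r ht0 ht.2.le hrr₀
      have hdivle : (2 + 2 * N t) / t ≤ A / t := by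
        have hAb : 2 + 2 * N t ≤ A := by rw [hA]; nlinarith
        gcongr
      linarith
  have hFlr : F r ≤ F s := hanti (Set.left_mem_Icc.mpr hsr.le) (Set.right_mem_Icc.mpr hsr.le) hsr.le
  -- unpack F r ≤ F s
  have hhs : 0 < h s := hpos s ⟨hs, (hsr.le.trans hrr₀)⟩
  have hhr : 0 < h r := hpos r ⟨hr, hrr₀⟩
  have hlog : Real.log (h r) + A * (Real.log s - Real.log r) - C * r ^ 2 / 2
      ≤ Real.log (h s) := by
    have hs2 : 0 ≤ C * s ^ 2 / 2 := by positivity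
    simp only [hF] at hFlr
    nlinarith [hFlr]
  have hsr0 : 0 < s / r := div_pos hs hr
  have hpow : (s / r) ^ A = Real.exp (A * Real.log (s / r)) := by
    rw [Real.rpow_def_of_pos hsr0, mul_comm]
  calc Real.exp (-(C * r ^ 2) / 2) * (s / r) ^ A * h r
      = Real.exp (-(C * r ^ 2) / 2 + A * (Real.log s - Real.log r)
          + Real.log (h r)) := by
        rw [hpow, Real.log_div hs.ne' hr.ne', ← Real.exp_log hhr,
          ← Real.exp_add, ← Real.exp_add, Real.log_exp]
    _ ≤ Real.exp (Real.log (h s)) := by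
        apply Real.exp_le_exp.mpr
        linarith
    _ = h s := Real.exp_log hhs
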